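/- For any finite sequence of distinct field elements x_1,...,x_n in a field of characteristic zero and any polynomial P of degree at most n+1, the expression Σ_{j=1}^n P(x_j)/∏_{i≠j}(x_j−x_i) is a polynomial function of (x_1,...,x_n) that is symmetric and of degree at most 2 in the x_j. -/

import Mathlib

open Finset Polynomial

lemma aux_eval_esymm {K : Type*} [CommSemiring K] {n : ℕ} (x : Fin n → K) (k : ℕ) :
    MvPolynomial.eval x (MvPolynomial.esymm (Fin n) K k) = (Finset.univ.val.map x).esymm k := by
  simpa using MvPolynomial.aeval_esymm_eq_multiset_esymm (Fin n) K k x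

lemma aux_td {σ K : Type*} [Fintype σ] [CommSemiring K] [Nontrivial K] (k : ℕ) :
    (MvPolynomial.esymm σ K k).totalDegree ≤ k := by
  rw [MvPolynomial.esymm]
  refine (MvPolynomial.totalDegree_finset_sum _ _).trans ?_
  refine Finset.sup_le fun t ht => ?_
  refine (MvPolynomial.totalDegree_finset_prod _ _).trans ?_
  calc ∑ i ∈ t, (MvPolynomial.X i : MvPolynomial σ K).totalDegree ≤ ∑ i ∈ t, 1 :=
        Finset.sum_le_sum fun i _ => (MvPolynomial.totalDegree_X i).le
    _ = t.card := by simp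
    _ = k := (Finset.mem_powersetCard.mp ht).2

set_option maxHeartbeats 1000000 in
lemma aux_Q {K : Type*} [CommRing K] [Nontrivial K] {n : ℕ} (c1 c2 c3 : K) :
    (MvPolynomial.C c1 + MvPolynomial.C c2 * MvPolynomial.esymm (Fin n) K 1 +
      MvPolynomial.C c3 * ((MvPolynomial.esymm (Fin n) K 1)^2 -
        MvPolynomial.esymm (Fin n) K 2)).IsSymmetric ∧
    (MvPolynomial.C c1 + MvPolynomial.C c2 * MvPolynomial.esymm (Fin n) K 1 +
      MvPolynomial.C c3 * ((MvPolynomial.esymm (Fin n) K 1)^2 -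
        MvPolynomial.esymm (Fin n) K 2)).totalDegree ≤ 2 := by
  constructor
  · apply MvPolynomial.IsSymmetric.add
    · apply MvPolynomial.IsSymmetric.add
      · exact MvPolynomial.IsSymmetric.C c1
      · exact (MvPolynomial.IsSymmetric.C c2).mul (MvPolynomial.esymm_isSymmetric _ _ 1)
    · apply MvPolynomial.IsSymmetric.mul (MvPolynomial.IsSymmetric.C c3)
      apply MvPolynomial.IsSymmetric.sub
      · rw [sq]
        exact (MvPolynomial.esymm_isSymmetric _ _ 1).mul (MvPolynomial.esymm_isSymmetric _ _ 1)
      · exact MvPolynomial.esymm_isSymmetric _ _ 2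
  · have h1 : (MvPolynomial.C c1 : MvPolynomial (Fin n) K).totalDegree ≤ 2 := by
      rw [MvPolynomial.totalDegree_C]; omega
    have he1 := aux_td (σ := Fin n) (K := K) 1
    have he2 := aux_td (σ := Fin n) (K := K) 2
    have h2 : (MvPolynomial.C c2 * MvPolynomial.esymm (Fin n) K 1).totalDegree ≤ 2 := by
      refine (MvPolynomial.totalDegree_mul _ _).trans ?_
      rw [MvPolynomial.totalDegree_C]
      omega
    have h3 : (MvPolynomial.C c3 * ((MvPolynomial.esymm (Fin n) K 1)^2 -
        MvPolynomial.esymm (Fin n) K 2)).totalDegree ≤ 2 := by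
      refine (MvPolynomial.totalDegree_mul _ _).trans ?_
      rw [MvPolynomial.totalDegree_C]
      have hsq : ((MvPolynomial.esymm (Fin n) K 1)^2).totalDegree ≤ 2 := by
        refine (MvPolynomial.totalDegree_pow _ _).trans ?_
        omega
      have hsub : ((MvPolynomial.esymm (Fin n) K 1)^2 -
          MvPolynomial.esymm (Fin n) K 2).totalDegree ≤ 2 := by
        rw [sub_eq_add_neg]
        refine (MvPolynomial.totalDegree_add _ _).trans (max_le hsq ?_)
        rw [MvPolynomial.totalDegree_neg]
        exact he2
      omega
    exact (MvPolynomial.totalDegree_add _ _).trans (max_le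
      ((MvPolynomial.totalDegree_add _ _).trans (max_le h1 h2)) h3)

theorem stmt_14 (K : Type*) [Field K] [CharZero K] (n : ℕ)
    (P : Polynomial K) (hP : P.degree ≤ n + 1) :
    ∃ Q : MvPolynomial (Fin n) K, Q.IsSymmetric ∧ Q.totalDegree ≤ 2 ∧
      ∀ x : Fin n → K, Function.Injective x →
        (∑ j : Fin n, P.eval (x j) / ∏ i ∈ Finset.univ.erase j, (x j - x i))
          = MvPolynomial.eval x Q := by
  classical
  match n, hP with
  | 0, hP =>
    exact ⟨0, MvPolynomial.IsSymmetric.zero, by simp, fun x hx => by simp⟩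
  | 1, hP =>
    refine ⟨MvPolynomial.C (P.coeff 0) + MvPolynomial.C (P.coeff 1) * MvPolynomial.esymm (Fin 1) K 1 +
      MvPolynomial.C (P.coeff 2) * ((MvPolynomial.esymm (Fin 1) K 1)^2 -
        MvPolynomial.esymm (Fin 1) K 2), (aux_Q _ _ _).1, (aux_Q _ _ _).2, fun x hx => ?_⟩
    have hnd : P.natDegree < 3 := by
      have : P.natDegree ≤ 2 := Polynomial.natDegree_le_iff_degree_le.mpr (by exact_mod_cast hP)
      omega
    have he2 : MvPolynomial.eval x (MvPolynomial.esymm (Fin 1) K 2) = 0 := by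
      rw [aux_eval_esymm, Multiset.esymm, Multiset.powersetCard_eq_empty _ (by simp)]
      simp
    have he1 : MvPolynomial.eval x (MvPolynomial.esymm (Fin 1) K 1) = x 0 := by
      rw [MvPolynomial.esymm_one]; simp
    have hev : P.eval (x 0) = P.coeff 0 + P.coeff 1 * x 0 + P.coeff 2 * (x 0)^2 := by
      rw [Polynomial.eval_eq_sum_range' hnd, Finset.sum_range_succ, Finset.sum_range_succ,
        Finset.sum_range_one]
      ring
    simp only [map_add, map_mul, MvPolynomial.eval_C, map_sub, map_pow, he1, he2]
    rw [show (Finset.univ : Finset (Fin 1)) = {0} from rfl, Finset.sum_singleton,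
      Finset.erase_singleton, Finset.prod_empty, div_one, hev]
    ring
  | (m+2), hP =>
    set n := m + 2 with hn
    refine ⟨MvPolynomial.C (P.coeff (m+1)) + MvPolynomial.C (P.coeff (m+2)) * MvPolynomial.esymm (Fin n) K 1 +
      MvPolynomial.C (P.coeff (m+3)) * ((MvPolynomial.esymm (Fin n) K 1)^2 -
        MvPolynomial.esymm (Fin n) K 2), (aux_Q _ _ _).1, (aux_Q _ _ _).2, fun x hx => ?_⟩
    have hvs : Set.InjOn x ↑(univ : Finset (Fin n)) := fun a _ b _ h => hx h
    set N := Lagrange.nodal (univ : Finset (Fin n)) x with hNdef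
    have hNmonic : N.Monic := Lagrange.nodal_monic
    have hNnat : N.natDegree = n := by
      rw [hNdef, Lagrange.natDegree_nodal, card_univ, Fintype.card_fin]
    set E1 := (Finset.univ.val.map x).esymm 1 with hE1
    set E2 := (Finset.univ.val.map x).esymm 2 with hE2
    -- Vieta
    have hcard : Multiset.card (Finset.univ.val.map x) = n := by
      simp [Finset.card_univ]
      omega
    have hNcoeff : ∀ k, k ≤ n → N.coeff k = (-1)^(n-k) * (Finset.univ.val.map x).esymm (n-k) := by
      intro k hk
      have h := Multiset.prod_X_sub_C_coeff (Finset.univ.val.map x) (k := k) (by rw [hcard]; exact hk)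
      rw [hcard] at h
      rw [← h, hNdef, Lagrange.nodal_eq, Finset.prod_eq_multiset_prod, Multiset.map_map]
      rfl
    have hN1 : N.coeff (m+1) = -E1 := by
      have := hNcoeff (m+1) (by omega)
      have h2 : n - (m+1) = 1 := by omega
      rw [h2, pow_one, neg_one_mul] at this
      exact this
    have hN2 : N.coeff m = E2 := by
      have := hNcoeff m (by omega)
      have h2 : n - m = 2 := by omega
      rw [h2, neg_one_sq, one_mul] at this
      exact this
    have hNtop : N.coeff n = 1 := by
      have := hNmonic.coeff_natDegree
      rwa [hNnat] at this
    have hNabove : N.coeff (m+3) = 0 :=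
      Polynomial.coeff_eq_zero_of_natDegree_lt (by omega)
    -- the sum is the top coefficient of the interpolation
    set f : Fin n → K := fun j => P.eval (x j) with hf
    set L := Lagrange.interpolate univ x f with hL
    have hsum : (∑ j : Fin n, P.eval (x j) / ∏ i ∈ univ.erase j, (x j - x i)) = L.coeff (m+1) := by
      rw [hL, Lagrange.interpolate_apply, Polynomial.finset_sum_coeff]
      refine Finset.sum_congr rfl fun j _ => ?_
      rw [Polynomial.coeff_C_mul,
        Lagrange.basis_eq_prod_sub_inv_mul_nodal_div (mem_univ j),
        ← Lagrange.nodal_erase_eq_nodal_div (mem_univ j), Polynomial.coeff_C_mul]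
      have hmono : (Lagrange.nodal (univ.erase j) x).Monic := Lagrange.nodal_monic
      have hdeg : (Lagrange.nodal (univ.erase j) x).natDegree = m + 1 := by
        rw [Lagrange.natDegree_nodal, Finset.card_erase_of_mem (mem_univ j), card_univ,
          Fintype.card_fin]
        omega
      have : (Lagrange.nodal (univ.erase j) x).coeff (m+1) = 1 := by
        rw [← hdeg]; exact hmono.coeff_natDegree
      rw [this, Lagrange.nodalWeight, mul_one, div_eq_mul_inv, ← Finset.prod_inv_distrib]
    -- interpolation = remainder
    have hRdeg : (P %ₘ N).degree < ((univ : Finset (Fin n)).card : WithBot ℕ) := by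
      refine (Polynomial.degree_modByMonic_lt P hNmonic).trans_le ?_
      rw [hNdef, Lagrange.degree_nodal]
    have hmod : P %ₘ N = L := by
      refine Lagrange.eq_interpolate_of_eval_eq f hvs hRdeg fun i _ => ?_
      have h := Polynomial.modByMonic_add_div P N
      have h2 : (P %ₘ N).eval (x i) + N.eval (x i) * (P /ₘ N).eval (x i) = P.eval (x i) := by
        rw [← Polynomial.eval_mul, ← Polynomial.eval_add, h]
      rw [Lagrange.eval_nodal_at_node (mem_univ i)] at h2
      simpa [hf] using h2
    -- division: the quotient has degree ≤ 1
    have hPnat : P.natDegree ≤ m + 3 := Polynomial.natDegree_le_iff_degree_le.mpr (by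
      exact_mod_cast hP)
    have hDnat : (P /ₘ N).natDegree ≤ 1 := by
      rw [Polynomial.natDegree_divByMonic P hNmonic, hNnat]
      omega
    set a := (P /ₘ N).coeff 1 with ha_def
    set b := (P /ₘ N).coeff 0 with hb_def
    have hDeq : P /ₘ N = Polynomial.C a * Polynomial.X + Polynomial.C b :=
      Polynomial.eq_X_add_C_of_natDegree_le_one hDnat
    have hPeq : N * (Polynomial.C a * Polynomial.X + Polynomial.C b) = P - P %ₘ N := by
      rw [← hDeq]
      have h := Polynomial.modByMonic_add_div P N
      linear_combination h
    have hRc : ∀ k, n ≤ k → (P %ₘ N).coeff k = 0 := by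
      intro k hk
      refine Polynomial.coeff_eq_zero_of_degree_lt ((Polynomial.degree_modByMonic_lt P hNmonic).trans_le ?_)
      rw [hNdef, Lagrange.degree_nodal, card_univ, Fintype.card_fin]
      exact_mod_cast hk
    have hcoeffs : ∀ k, a * (N * Polynomial.X).coeff k + b * N.coeff k
        = P.coeff k - (P %ₘ N).coeff k := by
      intro k
      have h1 : N * (Polynomial.C a * Polynomial.X + Polynomial.C b)
          = Polynomial.C a * (N * Polynomial.X) + Polynomial.C b * N := by ring
      have := congrArg (fun p => Polynomial.coeff p k) hPeq
      simpa [h1, Polynomial.coeff_add, Polynomial.coeff_sub, Polynomial.coeff_C_mul] using this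
    have hk3 := hcoeffs (m+3)
    rw [Polynomial.coeff_mul_X, hRc (m+3) (by omega), hNtop, hNabove] at hk3
    -- hk3 : a * 1 + b * 0 = P.coeff (m+3) - 0
    have ha : a = P.coeff (m+3) := by linear_combination hk3
    have hk2 := hcoeffs (m+2)
    rw [Polynomial.coeff_mul_X, hRc (m+2) (by omega), hN1, hNtop] at hk2
    -- hk2 : a * (-E1) + b * 1 = P.coeff (m+2) - 0
    have hk1 := hcoeffs (m+1)
    rw [Polynomial.coeff_mul_X, hN1, hN2] at hk1
    -- hk1 : a * E2 + b * (-E1) = P.coeff (m+1) - (P %ₘ N).coeff (m+1)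
    rw [hsum, ← hmod]
    simp only [map_add, map_mul, MvPolynomial.eval_C, map_sub, map_pow,
      aux_eval_esymm, ← hE1, ← hE2]
    have hb : b = P.coeff (m+2) + a * E1 := by linear_combination hk2
    rw [ha] at hk1 hb
    linear_combination hk1 + E1 * hb
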